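/- arXiv:1303.5145 — 2 statements merged into one kernel-verified Lean document; each statement's English description precedes it below -/
import Mathlib

section
/- Let q = 1 and K = 2. Let n₁, n₂ > 0, λ₁, λ₂ ≥ 0, let S¹, S² be symmetric p×p real matrices, let (I₁,…,I_L) be a partition of {1,…,p}, and let T = ∪_{l=1}^L I_l × I_l. If for every (i,j) ∈ T^c one has n₁|S¹_{ij}| ≤ λ₁ + λ₂/2, n₂|S²_{ij}| ≤ λ₁ + λ₂/2, and |n₁S¹_{ij} + n₂S²_{ij}| ≤ 2λ₁, then every pair (Θ̂¹, Θ̂²) of symmetric positive definite p×p matrices minimizing the PNJGL objective F(Θ¹,Θ²) = Σ_{k=1}^2 n_k(−log det Θᵏ + trace(SᵏΘᵏ)) + λ₁ Σ_{k=1}^2 Σ_{i,j}|Θᵏ_{ij}| + λ₂ Ω₁(Θ¹ − Θ²) over all pairs of symmetric positive definite matrices has both Θ̂¹ and Θ̂² supported on T. -/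
open Matrix
open scoped ENNReal BigOperators

/-- The ℓ_q norm of a finitely-indexed real vector, for q ∈ [0,∞]
(the maximum absolute entry when q = ∞). -/
noncomputable def lqNorm (q : ℝ≥0∞) {ι : Type*} [Fintype ι] (x : ι → ℝ) : ℝ :=
  ‖(WithLp.equiv q (ι → ℝ)).symm x‖

/-- The row-column overlap norm Ω_q of a K-tuple of p×p real matrices:
the infimum of Σ_j ‖([V¹;…;Vᴷ])_j‖_q over all decompositions Θᵏ = Vᵏ + (Vᵏ)ᵀ. -/
noncomputable def rcon (q : ℝ≥0∞) (K p : ℕ)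
    (Θ : Fin K → Matrix (Fin p) (Fin p) ℝ) : ℝ :=
  sInf { r : ℝ | ∃ V : Fin K → Matrix (Fin p) (Fin p) ℝ,
    (∀ k, Θ k = V k + (V k)ᵀ) ∧
    r = ∑ j : Fin p, lqNorm q (fun ki : Fin K × Fin p => V ki.1 ki.2 j) }

/-- The row-column overlap norm Ω_q of a single p×p matrix (the case K = 1). -/
noncomputable def rcon1 (q : ℝ≥0∞) {p : ℕ} (Θ : Matrix (Fin p) (Fin p) ℝ) : ℝ :=
  sInf { r : ℝ | ∃ V : Matrix (Fin p) (Fin p) ℝ,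
    Θ = V + Vᵀ ∧ r = ∑ j : Fin p, lqNorm q (fun i => V i j) }

/-- The PNJGL objective for K = 2 precision matrices with q = 1. -/
noncomputable def pnjglObj2 {p : ℕ} (q : ℝ≥0∞) (n₁ n₂ lam₁ lam₂ : ℝ)
    (S₁ S₂ A B : Matrix (Fin p) (Fin p) ℝ) : ℝ :=
  n₁ * (-Real.log A.det + (S₁ * A).trace)
    + n₂ * (-Real.log B.det + (S₂ * B).trace)
    + lam₁ * (∑ i : Fin p, ∑ j : Fin p, |A i j|)
    + lam₁ * (∑ i : Fin p, ∑ j : Fin p, |B i j|)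
    + lam₂ * rcon1 q (A - B)

/-! ### Auxiliary lemmas -/

lemma lqNorm_one {ι : Type*} [Fintype ι] (x : ι → ℝ) : lqNorm 1 x = ∑ i, |x i| := by
  rw [lqNorm, PiLp.norm_eq_sum (by norm_num)]
  simp [Real.norm_eq_abs]

lemma rcon1_one' {p : ℕ} (Θ : Matrix (Fin p) (Fin p) ℝ) (hΘ : Θ.IsSymm) :
    rcon1 1 Θ = (1/2) * ∑ i : Fin p, ∑ j : Fin p, |Θ i j| := by
  have hmem : ((1:ℝ)/2) * (∑ i : Fin p, ∑ j : Fin p, |Θ i j|) ∈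
      { r : ℝ | ∃ V : Matrix (Fin p) (Fin p) ℝ,
        Θ = V + Vᵀ ∧ r = ∑ j : Fin p, lqNorm 1 (fun i => V i j) } := by
    refine ⟨(1/2 : ℝ) • Θ, ?_, ?_⟩
    · ext i j
      have := congrFun (congrFun hΘ i) j
      simp only [transpose_apply] at this
      simp only [Matrix.add_apply, Matrix.smul_apply, transpose_apply, this, smul_eq_mul]
      ring
    · simp only [lqNorm_one]
      rw [Finset.sum_comm, Finset.mul_sum]
      refine Finset.sum_congr rfl fun i _ => ?_
      rw [Finset.mul_sum]
      refine Finset.sum_congr rfl fun j _ => ?_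
      simp only [Matrix.smul_apply, smul_eq_mul, abs_mul]
      rw [abs_of_pos (by norm_num : (0:ℝ) < 1/2)]
  apply le_antisymm
  · apply csInf_le
    · refine ⟨0, fun r hr => ?_⟩
      obtain ⟨V, _, rfl⟩ := hr
      exact Finset.sum_nonneg fun j _ => norm_nonneg _
    · exact hmem
  · refine le_csInf ⟨_, hmem⟩ fun r hr => ?_
    obtain ⟨V, hV, rfl⟩ := hr
    simp only [lqNorm_one]
    have hsw : ∑ j : Fin p, ∑ i : Fin p, |V i j| = ∑ i : Fin p, ∑ j : Fin p, |V i j| :=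
      Finset.sum_comm
    have hsw2 : ∑ i : Fin p, ∑ j : Fin p, |V i j| = ∑ i : Fin p, ∑ j : Fin p, |V j i| :=
      Finset.sum_comm
    have key : ∑ i : Fin p, ∑ j : Fin p, |Θ i j|
        ≤ ∑ i : Fin p, ∑ j : Fin p, (|V i j| + |V j i|) := by
      refine Finset.sum_le_sum fun i _ => Finset.sum_le_sum fun j _ => ?_
      have : Θ i j = V i j + V j i := by
        rw [hV]; simp [Matrix.add_apply]
      rw [this]
      exact abs_add_le _ _
    have hsplit : ∑ i : Fin p, ∑ j : Fin p, (|V i j| + |V j i|)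
        = (∑ i : Fin p, ∑ j : Fin p, |V i j|) + ∑ i : Fin p, ∑ j : Fin p, |V j i| := by
      rw [← Finset.sum_add_distrib]
      exact Finset.sum_congr rfl fun i _ => Finset.sum_add_distrib
    linarith

lemma key_scalar (lam₁ lam₂ s t a b : ℝ) (hl1 : 0 ≤ lam₁) (hl2 : 0 ≤ lam₂)
    (h1 : |s| ≤ lam₁ + lam₂ / 2) (h2 : |t| ≤ lam₁ + lam₂ / 2)
    (h3 : |s + t| ≤ 2 * lam₁) :
    0 ≤ s * a + t * b + lam₁ * (|a| + |b|) + lam₂ / 2 * |a - b| := by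
  set v := max (s - lam₁) (max (-lam₁ - t) (-(lam₂ / 2))) with hv
  rw [abs_le] at h1 h2 h3
  have hv1 : |v| ≤ lam₂ / 2 := by
    rw [abs_le]
    constructor
    · exact neg_le_neg_iff.mpr (le_refl _) |>.trans (le_max_of_le_right (le_max_right _ _))
    · apply max_le (by linarith) (max_le (by linarith) (by linarith))
  have hv2 : |s - v| ≤ lam₁ := by
    rw [abs_le]
    constructor
    · have : v ≤ s + lam₁ := max_le (by linarith) (max_le (by linarith) (by linarith))
      linarith
    · have : s - lam₁ ≤ v := le_max_left _ _
      linarith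
  have hv3 : |t + v| ≤ lam₁ := by
    rw [abs_le]
    constructor
    · have : -lam₁ - t ≤ v := le_trans (le_max_left _ _) (le_max_right _ _)
      linarith
    · have : v ≤ lam₁ - t := max_le (by linarith) (max_le (by linarith) (by linarith))
      linarith
  have e1 : -((s - v) * a) ≤ lam₁ * |a| := by
    calc -((s-v)*a) ≤ |(s-v)*a| := neg_le_abs _
    _ = |s-v| * |a| := abs_mul _ _
    _ ≤ lam₁ * |a| := mul_le_mul_of_nonneg_right hv2 (abs_nonneg _)
  have e2 : -((t + v) * b) ≤ lam₁ * |b| := by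
    calc -((t+v)*b) ≤ |(t+v)*b| := neg_le_abs _
    _ = |t+v| * |b| := abs_mul _ _
    _ ≤ lam₁ * |b| := mul_le_mul_of_nonneg_right hv3 (abs_nonneg _)
  have e3 : -(v * (a - b)) ≤ lam₂ / 2 * |a - b| := by
    calc -(v*(a-b)) ≤ |v*(a-b)| := neg_le_abs _
    _ = |v| * |a-b| := abs_mul _ _
    _ ≤ lam₂/2 * |a-b| := mul_le_mul_of_nonneg_right hv1 (abs_nonneg _)
  nlinarith [abs_nonneg a, abs_nonneg b]

lemma herm_entry {p : ℕ} {X : Matrix (Fin p) (Fin p) ℝ} (hX : X.IsHermitian) (i j : Fin p) :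
    X j i = X i j := by
  have := congrFun (congrFun hX i) j
  simpa [Matrix.conjTranspose_apply] using this

open scoped Classical in
/-- Restriction of a matrix to the block support determined by `I`. -/
noncomputable def restr {p L : ℕ} (I : Fin L → Finset (Fin p))
    (A : Matrix (Fin p) (Fin p) ℝ) : Matrix (Fin p) (Fin p) ℝ :=
  Matrix.of fun i j => if ∃ l, i ∈ I l ∧ j ∈ I l then A i j else 0

section RestrFacts
variable {p L : ℕ} (I : Fin L → Finset (Fin p))

lemma restr_apply (A : Matrix (Fin p) (Fin p) ℝ) (i j : Fin p) :
    restr I A i j = if ∃ l, i ∈ I l ∧ j ∈ I l then A i j else 0 := by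
  simp [restr]

lemma same_symm {i j : Fin p} (h : ∃ l, i ∈ I l ∧ j ∈ I l) : ∃ l, j ∈ I l ∧ i ∈ I l :=
  ⟨h.choose, h.choose_spec.2, h.choose_spec.1⟩

lemma restr_apply_of_not (A : Matrix (Fin p) (Fin p) ℝ) {i j : Fin p}
    (h : ¬ ∃ l, i ∈ I l ∧ j ∈ I l) : restr I A i j = 0 := by
  rw [restr_apply, if_neg h]

lemma restr_apply_of_mem (A : Matrix (Fin p) (Fin p) ℝ) {i j : Fin p}
    (h : ∃ l, i ∈ I l ∧ j ∈ I l) : restr I A i j = A i j := by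
  rw [restr_apply, if_pos h]

variable (hpart : ∀ i : Fin p, ∃! l, i ∈ I l)

include hpart in
lemma indicator_sum (i j : Fin p) :
    ∑ l : Fin L, (if i ∈ I l then (1:ℝ) else 0) * (if j ∈ I l then (1:ℝ) else 0)
      = if ∃ l, i ∈ I l ∧ j ∈ I l then (1:ℝ) else 0 := by
  classical
  by_cases h : ∃ l, i ∈ I l ∧ j ∈ I l
  · obtain ⟨l₀, hi, hj⟩ := h
    rw [if_pos ⟨l₀, hi, hj⟩]
    rw [Finset.sum_eq_single l₀]
    · rw [if_pos hi, if_pos hj, one_mul]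
    · intro l _ hne
      by_cases hil : i ∈ I l
      · exact absurd ((hpart i).unique hil hi) hne
      · rw [if_neg hil, zero_mul]
    · intro h; exact absurd (Finset.mem_univ _) h
  · rw [if_neg h]
    apply Finset.sum_eq_zero
    intro l _
    by_cases hil : i ∈ I l
    · by_cases hjl : j ∈ I l
      · exact absurd ⟨l, hil, hjl⟩ h
      · rw [if_neg hjl, mul_zero]
    · rw [if_neg hil, zero_mul]

include hpart in
lemma restr_quadform (A : Matrix (Fin p) (Fin p) ℝ) (x : Fin p → ℝ) :
    x ⬝ᵥ (restr I A) *ᵥ x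
      = ∑ l : Fin L, (fun i => if i ∈ I l then x i else 0) ⬝ᵥ
          A *ᵥ (fun i => if i ∈ I l then x i else 0) := by
  classical
  have lhs_eq : x ⬝ᵥ (restr I A) *ᵥ x
      = ∑ i : Fin p, ∑ j : Fin p,
          (if ∃ l, i ∈ I l ∧ j ∈ I l then (1:ℝ) else 0) * (x i * A i j * x j) := by
    simp only [dotProduct, mulVec, restr_apply, Finset.mul_sum]
    refine Finset.sum_congr rfl fun i _ => Finset.sum_congr rfl fun j _ => ?_
    split_ifs <;> ring
  rw [lhs_eq]
  have rhs_eq : ∀ l : Fin L, (fun i => if i ∈ I l then x i else 0) ⬝ᵥ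
      A *ᵥ (fun i => if i ∈ I l then x i else 0)
      = ∑ i : Fin p, ∑ j : Fin p,
          ((if i ∈ I l then (1:ℝ) else 0) * (if j ∈ I l then (1:ℝ) else 0))
            * (x i * A i j * x j) := by
    intro l
    simp only [dotProduct, mulVec, Finset.mul_sum]
    refine Finset.sum_congr rfl fun i _ => Finset.sum_congr rfl fun j _ => ?_
    split_ifs <;> ring
  simp only [rhs_eq]
  rw [show (∑ l : Fin L, ∑ i : Fin p, ∑ j : Fin p,
      ((if i ∈ I l then (1:ℝ) else 0) * (if j ∈ I l then (1:ℝ) else 0)) * (x i * A i j * x j))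
      = ∑ i : Fin p, ∑ j : Fin p, ∑ l : Fin L,
      ((if i ∈ I l then (1:ℝ) else 0) * (if j ∈ I l then (1:ℝ) else 0)) * (x i * A i j * x j) from
    by rw [Finset.sum_comm]; exact Finset.sum_congr rfl fun i _ => Finset.sum_comm]
  refine Finset.sum_congr rfl fun i _ => Finset.sum_congr rfl fun j _ => ?_
  rw [← Finset.sum_mul, indicator_sum I hpart]

include hpart in
lemma restr_posDef {A : Matrix (Fin p) (Fin p) ℝ} (hA : A.PosDef) : (restr I A).PosDef := by
  classical
  rw [posDef_iff_dotProduct_mulVec]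
  constructor
  · ext i j
    simp only [conjTranspose_apply, star_trivial, restr_apply]
    by_cases h : ∃ l, j ∈ I l ∧ i ∈ I l
    · rw [if_pos h, if_pos (same_symm I h)]
      exact herm_entry hA.1 i j
    · rw [if_neg h, if_neg (fun hc => h (same_symm I hc))]
  · intro x hx
    simp only [star_trivial]
    rw [restr_quadform I hpart A x]
    obtain ⟨i₀, hi₀⟩ := Function.ne_iff.mp hx
    obtain ⟨l₀, hl₀, -⟩ := hpart i₀
    apply Finset.sum_pos'
    · intro l _
      have := hA.posSemidef.dotProduct_mulVec_nonneg (fun i => if i ∈ I l then x i else 0)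
      simpa using this
    · refine ⟨l₀, Finset.mem_univ _, ?_⟩
      have hne : (fun i => if i ∈ I l₀ then x i else 0) ≠ 0 := by
        intro hc
        have := congrFun hc i₀
        simp only [hl₀, if_pos, Pi.zero_apply] at this
        exact hi₀ this
      have := hA.dotProduct_mulVec_pos hne
      simpa using this
end RestrFacts

section Inv
variable {p L : ℕ} (I : Fin L → Finset (Fin p)) (hpart : ∀ i : Fin p, ∃! l, i ∈ I l)

include hpart in
lemma restr_commute_diag {A : Matrix (Fin p) (Fin p) ℝ} (l : Fin L) :
    restr I A * Matrix.diagonal (fun i => if i ∈ I l then (1:ℝ) else 0)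
      = Matrix.diagonal (fun i => if i ∈ I l then (1:ℝ) else 0) * restr I A := by
  classical
  ext i j
  rw [Matrix.mul_diagonal, Matrix.diagonal_mul]
  by_cases h : ∃ l', i ∈ I l' ∧ j ∈ I l'
  · obtain ⟨l₀, hi, hj⟩ := h
    have : (i ∈ I l) ↔ (j ∈ I l) := by
      constructor
      · intro hil
        have hl : l = l₀ := (hpart i).unique hil hi
        rw [hl]; exact hj
      · intro hjl
        have hl : l = l₀ := (hpart j).unique hjl hj
        rw [hl]; exact hi
    by_cases hil : i ∈ I l
    · rw [if_pos hil, if_pos (this.mp hil), mul_one, one_mul]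
    · rw [if_neg hil, if_neg (fun hc => hil (this.mpr hc)), mul_zero, zero_mul]
  · rw [restr_apply_of_not I A h, zero_mul, mul_zero]

include hpart in
lemma inv_restr_supported {A : Matrix (Fin p) (Fin p) ℝ} (hA : A.PosDef)
    {i j : Fin p} (h : ¬ ∃ l, i ∈ I l ∧ j ∈ I l) : (restr I A)⁻¹ i j = 0 := by
  classical
  have hPD := restr_posDef I hpart hA
  have hdet : IsUnit (restr I A).det := hPD.det_pos.ne'.isUnit
  obtain ⟨l₀, hil₀, -⟩ := hpart i
  have hjl₀ : j ∉ I l₀ := fun hc => h ⟨l₀, hil₀, hc⟩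
  set P := Matrix.diagonal (fun i => if i ∈ I l₀ then (1:ℝ) else 0) with hP
  have hcomm : restr I A * P = P * restr I A := restr_commute_diag I hpart l₀
  have hinv : (restr I A)⁻¹ * P = P * (restr I A)⁻¹ := by
    calc (restr I A)⁻¹ * P = (restr I A)⁻¹ * P * (restr I A * (restr I A)⁻¹) := by
          rw [Matrix.mul_nonsing_inv _ hdet, mul_one]
      _ = (restr I A)⁻¹ * (P * restr I A) * (restr I A)⁻¹ := by
          simp only [Matrix.mul_assoc]
      _ = (restr I A)⁻¹ * (restr I A * P) * (restr I A)⁻¹ := by rw [hcomm]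
      _ = ((restr I A)⁻¹ * restr I A) * (P * (restr I A)⁻¹) := by
          simp only [Matrix.mul_assoc]
      _ = P * (restr I A)⁻¹ := by rw [Matrix.nonsing_inv_mul _ hdet, one_mul]
  have := congrFun (congrFun hinv i) j
  rw [Matrix.mul_diagonal, Matrix.diagonal_mul] at this
  rw [if_neg hjl₀, if_pos hil₀, mul_zero, one_mul] at this
  exact this.symm

include hpart in
lemma trace_mul_inv_restr {A : Matrix (Fin p) (Fin p) ℝ} (hA : A.PosDef) :
    (A * (restr I A)⁻¹).trace = (p : ℝ) := by
  classical
  have hdet : IsUnit (restr I A).det := (restr_posDef I hpart hA).det_pos.ne'.isUnit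
  have step : A * (restr I A)⁻¹ = restr I A * (restr I A)⁻¹ + (A - restr I A) * (restr I A)⁻¹ := by
    rw [← add_mul]
    congr 1
    abel
  have hzero : ((A - restr I A) * (restr I A)⁻¹).trace = 0 := by
    rw [Matrix.trace]
    apply Finset.sum_eq_zero
    intro i _
    rw [Matrix.diag_apply, Matrix.mul_apply]
    apply Finset.sum_eq_zero
    intro j _
    by_cases h : ∃ l, i ∈ I l ∧ j ∈ I l
    · rw [Matrix.sub_apply, restr_apply, if_pos h, sub_self, zero_mul]
    · rw [inv_restr_supported I hpart hA (fun hc => h (same_symm I hc)), mul_zero]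
  rw [step, Matrix.trace_add, hzero, add_zero, Matrix.mul_nonsing_inv _ hdet, Matrix.trace_one]
  simp

end Inv

lemma trace_eq_sum_eigs {m : ℕ} {M : Matrix (Fin m) (Fin m) ℝ} (hM : M.IsHermitian) :
    M.trace = ∑ i, hM.eigenvalues i := by
  have h := hM.conjStarAlgAut_star_eigenvectorUnitary
  rw [Unitary.conjStarAlgAut_apply, Unitary.coe_star, star_star] at h
  have h2 : ((star (hM.eigenvectorUnitary : Matrix (Fin m) (Fin m) ℝ)) * M *
      (hM.eigenvectorUnitary : Matrix (Fin m) (Fin m) ℝ)).trace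
      = M.trace := by
    rw [Matrix.trace_mul_cycle, (Matrix.mem_unitaryGroup_iff).mp (hM.eigenvectorUnitary).2,
      one_mul]
  rw [h] at h2
  rw [← h2, Matrix.trace_diagonal]
  simp [RCLike.ofReal]

lemma det_eq_prod_eigs {m : ℕ} {M : Matrix (Fin m) (Fin m) ℝ} (hM : M.IsHermitian) :
    M.det = ∏ i, hM.eigenvalues i := by
  rw [hM.det_eq_prod_eigenvalues]; simp [RCLike.ofReal]

lemma eq_one_of_eigs_one {m : ℕ} {M : Matrix (Fin m) (Fin m) ℝ} (hM : M.IsHermitian)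
    (h : ∀ i, hM.eigenvalues i = 1) : M = 1 := by
  have := hM.spectral_theorem
  rw [this]
  have hd : Matrix.diagonal (RCLike.ofReal ∘ hM.eigenvalues) = (1 : Matrix (Fin m) (Fin m) ℝ) := by
    ext i j
    by_cases hij : i = j
    · subst hij; simp [Matrix.diagonal_apply_eq, h i, RCLike.ofReal, Matrix.one_apply_eq]
    · simp [Matrix.diagonal_apply_ne _ hij, Matrix.one_apply_ne hij]
  rw [hd, map_one]

lemma logdet_le_trace_sub {m : ℕ} {M : Matrix (Fin m) (Fin m) ℝ} (hM : M.PosSemidef)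
    (hdet : M.det ≠ 0) :
    Real.log M.det ≤ M.trace - m ∧ (M ≠ 1 → Real.log M.det < M.trace - m) := by
  have hpos : ∀ i, 0 < hM.1.eigenvalues i := by
    intro i
    rcases lt_or_eq_of_le (hM.eigenvalues_nonneg i) with h | h
    · exact h
    · exfalso
      apply hdet
      rw [det_eq_prod_eigs hM.1]
      exact Finset.prod_eq_zero (Finset.mem_univ i) h.symm
  have hdeteq := det_eq_prod_eigs hM.1
  have htr := trace_eq_sum_eigs hM.1
  have hlog : Real.log M.det = ∑ i, Real.log (hM.1.eigenvalues i) := by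
    rw [hdeteq, Real.log_prod fun i _ => (hpos i).ne']
  have hle : ∀ i : Fin m, Real.log (hM.1.eigenvalues i) ≤ hM.1.eigenvalues i - 1 :=
    fun i => Real.log_le_sub_one_of_pos (hpos i)
  constructor
  · rw [hlog, htr]
    have : ∑ i : Fin m, Real.log (hM.1.eigenvalues i) ≤ ∑ i : Fin m, (hM.1.eigenvalues i - 1) :=
      Finset.sum_le_sum fun i _ => hle i
    rw [Finset.sum_sub_distrib] at this
    simpa using this
  · intro hne
    obtain ⟨i₀, hi₀⟩ : ∃ i, hM.1.eigenvalues i ≠ 1 := by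
      by_contra hc
      push_neg at hc
      exact hne (eq_one_of_eigs_one hM.1 hc)
    rw [hlog, htr]
    have : ∑ i : Fin m, Real.log (hM.1.eigenvalues i) < ∑ i : Fin m, (hM.1.eigenvalues i - 1) := by
      apply Finset.sum_lt_sum (fun i _ => hle i) ⟨i₀, Finset.mem_univ _, ?_⟩
      exact Real.log_lt_sub_one_of_pos (hpos i₀) hi₀
    rw [Finset.sum_sub_distrib] at this
    simpa using this

open scoped MatrixOrder in
lemma logdet_restr {p L : ℕ} (I : Fin L → Finset (Fin p)) (hpart : ∀ i : Fin p, ∃! l, i ∈ I l)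
    {A : Matrix (Fin p) (Fin p) ℝ} (hA : A.PosDef) :
    Real.log A.det ≤ Real.log (restr I A).det ∧
      (A ≠ restr I A → Real.log A.det < Real.log (restr I A).det) := by
  classical
  have hA2 : (restr I A).PosDef := restr_posDef I hpart hA
  have hAinvPD : ((restr I A)⁻¹).PosDef := hA2.inv
  set B := CFC.sqrt ((restr I A)⁻¹) with hBdef
  have hBpsd : B.PosSemidef := (CFC.sqrt_nonneg _).posSemidef
  have hBB : B * B = (restr I A)⁻¹ := CFC.sqrt_mul_sqrt_self _ hAinvPD.posSemidef.nonneg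
  have hdetRA : 0 < (restr I A).det := hA2.det_pos
  have hdetA : 0 < A.det := hA.det_pos
  have hdetRAinv : ((restr I A)⁻¹).det = ((restr I A).det)⁻¹ := by
    rw [Matrix.det_nonsing_inv, Ring.inverse_eq_inv]
  have hdetB2 : B.det * B.det = ((restr I A).det)⁻¹ := by
    rw [← Matrix.det_mul, hBB, hdetRAinv]
  have hdetBne : B.det ≠ 0 := by
    intro h
    rw [h, mul_zero] at hdetB2
    exact (inv_ne_zero hdetRA.ne') hdetB2.symm
  have hMpsd : (B * A * B).PosSemidef := by
    have := hA.posSemidef.mul_mul_conjTranspose_same B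
    rwa [hBpsd.1] at this
  have hdetM : (B * A * B).det = A.det * ((restr I A).det)⁻¹ := by
    rw [Matrix.det_mul, Matrix.det_mul, ← hdetB2]
    ring
  have hdetMne : (B * A * B).det ≠ 0 := by
    rw [hdetM]
    exact mul_ne_zero hdetA.ne' (inv_ne_zero hdetRA.ne')
  have htr : (B * A * B).trace = (p : ℝ) := by
    rw [Matrix.trace_mul_cycle, hBB, Matrix.trace_mul_comm]
    exact trace_mul_inv_restr I hpart hA
  have hmain := logdet_le_trace_sub hMpsd hdetMne
  have hlogM : Real.log (B * A * B).det = Real.log A.det - Real.log (restr I A).det := by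
    rw [hdetM, Real.log_mul hdetA.ne' (inv_ne_zero hdetRA.ne'), Real.log_inv]
    ring
  constructor
  · have h1 := hmain.1
    rw [hlogM, htr] at h1
    linarith
  · intro hne
    have hMne1 : B * A * B ≠ 1 := by
      intro h1
      apply hne
      have hBdetu : IsUnit B.det := hdetBne.isUnit
      calc A = 1 * A * 1 := by rw [one_mul, mul_one]
        _ = (B⁻¹ * B) * A * (B * B⁻¹) := by
            rw [Matrix.nonsing_inv_mul _ hBdetu, Matrix.mul_nonsing_inv _ hBdetu]
        _ = B⁻¹ * (B * A * B) * B⁻¹ := by simp only [Matrix.mul_assoc]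
        _ = B⁻¹ * 1 * B⁻¹ := by rw [h1]
        _ = B⁻¹ * B⁻¹ := by rw [mul_one]
        _ = (B * B)⁻¹ := (Matrix.mul_inv_rev B B).symm
        _ = ((restr I A)⁻¹)⁻¹ := by rw [hBB]
        _ = restr I A := Matrix.nonsing_inv_nonsing_inv _ hA2.det_pos.ne'.isUnit
    have h2 := hmain.2 hMne1
    rw [hlogM, htr] at h2
    linarith

/-- Theorem 3, sufficiency of the necessary conditions when q = 1
and K = 2: if for every (i,j) ∈ T^c we have n₁|S¹_{ij}| ≤ λ₁ + λ₂/2,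
n₂|S²_{ij}| ≤ λ₁ + λ₂/2 and |n₁S¹_{ij} + n₂S²_{ij}| ≤ 2λ₁, then every pair of
symmetric positive definite minimizers of the PNJGL objective with q = 1 is
supported on T. -/
theorem pnjgl_sufficient_q_one (p L : ℕ)
    (n₁ n₂ : ℝ) (hn₁ : 0 < n₁) (hn₂ : 0 < n₂)
    (lam₁ lam₂ : ℝ) (hlam₁ : 0 ≤ lam₁) (hlam₂ : 0 ≤ lam₂)
    (S₁ S₂ : Matrix (Fin p) (Fin p) ℝ) (hS₁ : S₁.IsSymm) (hS₂ : S₂.IsSymm)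
    (I : Fin L → Finset (Fin p)) (hpart : ∀ i : Fin p, ∃! l, i ∈ I l)
    (hcond : ∀ i j : Fin p, ¬ (∃ l, i ∈ I l ∧ j ∈ I l) →
      n₁ * |S₁ i j| ≤ lam₁ + lam₂ / 2 ∧
      n₂ * |S₂ i j| ≤ lam₁ + lam₂ / 2 ∧
      |n₁ * S₁ i j + n₂ * S₂ i j| ≤ 2 * lam₁)
    (Θ₁ Θ₂ : Matrix (Fin p) (Fin p) ℝ) (hΘ₁ : Θ₁.PosDef) (hΘ₂ : Θ₂.PosDef)
    (hmin : ∀ A B : Matrix (Fin p) (Fin p) ℝ, A.PosDef → B.PosDef →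
      pnjglObj2 1 n₁ n₂ lam₁ lam₂ S₁ S₂ Θ₁ Θ₂
        ≤ pnjglObj2 1 n₁ n₂ lam₁ lam₂ S₁ S₂ A B) :
    ∀ i j : Fin p, ¬ (∃ l, i ∈ I l ∧ j ∈ I l) → Θ₁ i j = 0 ∧ Θ₂ i j = 0 := by
  classical
  have hR₁PD : (restr I Θ₁).PosDef := restr_posDef I hpart hΘ₁
  have hR₂PD : (restr I Θ₂).PosDef := restr_posDef I hpart hΘ₂
  have hsymdiff : ∀ X Y : Matrix (Fin p) (Fin p) ℝ, X.IsHermitian → Y.IsHermitian →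
      (X - Y).IsSymm := by
    intro X Y hX hY
    ext i j
    simp only [Matrix.transpose_apply, Matrix.sub_apply]
    rw [herm_entry hX i j, herm_entry hY i j]
  have obj_eq : ∀ X Y : Matrix (Fin p) (Fin p) ℝ, (X - Y).IsSymm →
      pnjglObj2 1 n₁ n₂ lam₁ lam₂ S₁ S₂ X Y
        = n₁ * (-Real.log X.det) + n₂ * (-Real.log Y.det)
          + ∑ i : Fin p, ∑ j : Fin p,
              (n₁ * (S₁ i j * X j i) + n₂ * (S₂ i j * Y j i)
                + lam₁ * |X i j| + lam₁ * |Y i j| + lam₂ * (1/2 * |X i j - Y i j|)) := by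
    intro X Y hsym
    have ht1 : (S₁ * X).trace = ∑ i : Fin p, ∑ j : Fin p, S₁ i j * X j i := by
      simp [Matrix.trace, Matrix.mul_apply, Matrix.diag]
    have ht2 : (S₂ * Y).trace = ∑ i : Fin p, ∑ j : Fin p, S₂ i j * Y j i := by
      simp [Matrix.trace, Matrix.mul_apply, Matrix.diag]
    rw [pnjglObj2, rcon1_one' _ hsym, ht1, ht2]
    simp only [Matrix.sub_apply]
    simp only [Finset.sum_add_distrib, ← Finset.mul_sum]
    ring
  have hEle : (∑ i : Fin p, ∑ j : Fin p,
        (n₁ * (S₁ i j * restr I Θ₁ j i) + n₂ * (S₂ i j * restr I Θ₂ j i)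
          + lam₁ * |restr I Θ₁ i j| + lam₁ * |restr I Θ₂ i j|
          + lam₂ * (1/2 * |restr I Θ₁ i j - restr I Θ₂ i j|)))
      ≤ ∑ i : Fin p, ∑ j : Fin p,
        (n₁ * (S₁ i j * Θ₁ j i) + n₂ * (S₂ i j * Θ₂ j i)
          + lam₁ * |Θ₁ i j| + lam₁ * |Θ₂ i j| + lam₂ * (1/2 * |Θ₁ i j - Θ₂ i j|)) := by
    refine Finset.sum_le_sum fun i _ => Finset.sum_le_sum fun j _ => ?_
    by_cases h : ∃ l, i ∈ I l ∧ j ∈ I l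
    · have hji := same_symm I h
      rw [restr_apply_of_mem I _ h, restr_apply_of_mem I _ h,
        restr_apply_of_mem I _ hji, restr_apply_of_mem I _ hji]
    · have hji : ¬ ∃ l, j ∈ I l ∧ i ∈ I l := fun hc => h (same_symm I hc)
      rw [restr_apply_of_not I _ h, restr_apply_of_not I _ h,
        restr_apply_of_not I _ hji, restr_apply_of_not I _ hji]
      obtain ⟨hc1, hc2, hc3⟩ := hcond i j h
      have habs1 : |n₁ * S₁ i j| ≤ lam₁ + lam₂ / 2 := by
        rw [abs_mul, abs_of_pos hn₁]; exact hc1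
      have habs2 : |n₂ * S₂ i j| ≤ lam₁ + lam₂ / 2 := by
        rw [abs_mul, abs_of_pos hn₂]; exact hc2
      have key := key_scalar lam₁ lam₂ (n₁ * S₁ i j) (n₂ * S₂ i j) (Θ₁ i j) (Θ₂ i j)
        hlam₁ hlam₂ habs1 habs2 hc3
      have e1 : Θ₁ j i = Θ₁ i j := herm_entry hΘ₁.1 i j
      have e2 : Θ₂ j i = Θ₂ i j := herm_entry hΘ₂.1 i j
      rw [e1, e2]
      simp only [mul_zero, abs_zero, sub_zero, sub_self, add_zero, zero_add]
      nlinarith [key]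
  have hle1 := logdet_restr I hpart hΘ₁
  have hle2 := logdet_restr I hpart hΘ₂
  have hmin' := hmin (restr I Θ₁) (restr I Θ₂) hR₁PD hR₂PD
  rw [obj_eq Θ₁ Θ₂ (hsymdiff _ _ hΘ₁.1 hΘ₂.1),
      obj_eq _ _ (hsymdiff _ _ hR₁PD.1 hR₂PD.1)] at hmin'
  have hkey1 : Θ₁ = restr I Θ₁ := by
    by_contra hc
    have hstrict := hle1.2 hc
    have hm1 : n₁ * Real.log Θ₁.det < n₁ * Real.log (restr I Θ₁).det :=
      mul_lt_mul_of_pos_left hstrict hn₁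
    have hm2 : n₂ * Real.log Θ₂.det ≤ n₂ * Real.log (restr I Θ₂).det :=
      mul_le_mul_of_nonneg_left hle2.1 hn₂.le
    linarith [hmin', hEle]
  have hkey2 : Θ₂ = restr I Θ₂ := by
    by_contra hc
    have hstrict := hle2.2 hc
    have hm2 : n₂ * Real.log Θ₂.det < n₂ * Real.log (restr I Θ₂).det :=
      mul_lt_mul_of_pos_left hstrict hn₂
    have hm1 : n₁ * Real.log Θ₁.det ≤ n₁ * Real.log (restr I Θ₁).det :=
      mul_le_mul_of_nonneg_left hle1.1 hn₁.le
    linarith [hmin', hEle]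
  intro i j h
  constructor
  · rw [hkey1]
    exact restr_apply_of_not I _ h
  · rw [hkey2]
    exact restr_apply_of_not I _ h
end

section
/- Let q ∈ [1,∞], K ≥ 1, n₁,…,n_K > 0, λ₁, λ₂ ≥ 0, let S¹,…,Sᴷ be symmetric p×p real matrices, let (I₁,…,I_L) be a partition of {1,…,p}, and let T = ∪_{l=1}^L I_l × I_l. Suppose Θ̂¹,…,Θ̂ᴷ are symmetric positive definite p×p matrices that minimize the CNJGL objective F(Θ¹,…,Θᴷ) = Σ_{k=1}^K n_k(−log det Θᵏ + trace(SᵏΘᵏ)) + λ₁ Σ_{k=1}^K Σ_{i,j}|Θᵏ_{ij}| + λ₂ Ω_q(Θ¹ − diag(Θ¹),…,Θᴷ − diag(Θᴷ)) over all K-tuples of symmetric positive definite matrices, and that each Θ̂ᵏ is supported on T. Then n_k|Sᵏ_{ij}| ≤ λ₁ + λ₂/2 for all (i,j) ∈ T^c and all k = 1,…,K. -/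
open Matrix
open scoped ENNReal BigOperators

/-- The CNJGL objective for K precision matrices:
Σ_k n_k(−log det Θᵏ + trace(SᵏΘᵏ)) + λ₁ Σ_k Σ_{i,j}|Θᵏ_{ij}|
  + λ₂ Ω_q(Θ¹ − diag(Θ¹),…,Θᴷ − diag(Θᴷ)). -/
noncomputable def cnjglObj {K p : ℕ} (q : ℝ≥0∞) (n : Fin K → ℝ)
    (lam₁ lam₂ : ℝ) (S : Fin K → Matrix (Fin p) (Fin p) ℝ)
    (Θ : Fin K → Matrix (Fin p) (Fin p) ℝ) : ℝ :=
  (∑ k : Fin K, n k * (-Real.log (Θ k).det + (S k * Θ k).trace))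
    + lam₁ * (∑ k : Fin K, ∑ i : Fin p, ∑ j : Fin p, |Θ k i j|)
    + lam₂ * rcon q K p (fun k => Θ k - Matrix.diagonal fun i => Θ k i i)

/-! ### Auxiliary lemmas -/

lemma lqNorm_nonneg' (q : ℝ≥0∞) [Fact (1 ≤ q)] {ι : Type*} [Fintype ι] (x : ι → ℝ) :
    0 ≤ lqNorm q x := by
  unfold lqNorm; exact norm_nonneg _

lemma lqNorm_add_le (q : ℝ≥0∞) [Fact (1 ≤ q)] {ι : Type*} [Fintype ι] (x y : ι → ℝ) :
    lqNorm q (x + y) ≤ lqNorm q x + lqNorm q y := by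
  unfold lqNorm
  rw [WithLp.equiv_symm_apply, WithLp.toLp_add]
  exact norm_add_le _ _

lemma lqNorm_single (q : ℝ≥0∞) [Fact (1 ≤ q)] {ι : Type*} [Fintype ι] [DecidableEq ι]
    (a : ι) (t : ℝ) : lqNorm q (Pi.single a t) = |t| := by
  unfold lqNorm
  rw [WithLp.equiv_symm_apply, PiLp.norm_toLp_single]
  exact Real.norm_eq_abs t

lemma sum_update_sub {K : ℕ} (f : Fin K → ℝ) (k : Fin K) (v : ℝ) :
    ∑ k', Function.update f k v k' = v - f k + ∑ k', f k' := by
  rw [Finset.sum_update_of_mem (Finset.mem_univ k),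
    ← Finset.sum_erase_add Finset.univ f (Finset.mem_univ k),
    Finset.sdiff_singleton_eq_erase]
  ring

lemma dot_std {p : ℕ} (i j : Fin p) (u : ℝ) (x : Fin p → ℝ) :
    x ⬝ᵥ (Matrix.single i j u *ᵥ x) = u * (x i * x j) := by
  rw [single_mulVec, dotProduct]
  rw [Finset.sum_eq_single i]
  · simp; ring
  · intro b _ hb; simp [Function.update, hb]
  · simp

lemma trace_mul_std {p : ℕ} (A : Matrix (Fin p) (Fin p) ℝ) (i j : Fin p) (u : ℝ) :
    (A * Matrix.single i j u).trace = A j i * u := by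
  rw [Matrix.trace]
  rw [Finset.sum_eq_single j]
  · simp [Matrix.diag, Matrix.mul_single_apply_same]
  · intro b _ hb
    rw [Matrix.diag_apply, Matrix.mul_apply]
    apply Finset.sum_eq_zero
    intro a _
    rw [Matrix.single_apply_of_ne _ _ _ _ _ (fun h => hb h.2.symm), mul_zero]
  · simp

lemma std_transpose {p : ℕ} (i j : Fin p) (u : ℝ) :
    (Matrix.single i j u)ᵀ = Matrix.single j i u := by
  ext a b
  simp [Matrix.single, and_comm]

lemma posdef_coercive {p : ℕ} {M : Matrix (Fin p) (Fin p) ℝ} (hM : M.PosDef) (i0 : Fin p) :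
    ∃ c > (0:ℝ), ∀ x : Fin p → ℝ, c * ‖x‖ ^ 2 ≤ x ⬝ᵥ (M *ᵥ x) := by
  haveI : Nonempty (Fin p) := ⟨i0⟩
  set f : (Fin p → ℝ) → ℝ := fun x => x ⬝ᵥ (M *ᵥ x) with hf
  have hcont : Continuous f := by
    have : f = fun x => ∑ a : Fin p, x a * ∑ b : Fin p, M a b * x b := by
      funext x; simp [f, dotProduct, mulVec]
    rw [this]
    exact continuous_finset_sum _ fun a _ => (continuous_apply a).mul
      (continuous_finset_sum _ fun b _ => (continuous_const.mul (continuous_apply b)))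
  have hsne : (Metric.sphere (0 : Fin p → ℝ) 1).Nonempty :=
    NormedSpace.sphere_nonempty.mpr zero_le_one
  obtain ⟨x₀, hx₀, hmin⟩ :=
    (isCompact_sphere (0 : Fin p → ℝ) 1).exists_isMinOn hsne hcont.continuousOn
  have hx₀n : ‖x₀‖ = 1 := mem_sphere_zero_iff_norm.mp hx₀
  have hx₀0 : x₀ ≠ 0 := by intro h; rw [h, norm_zero] at hx₀n; norm_num at hx₀n
  have hc : 0 < f x₀ := by
    have := hM.dotProduct_mulVec_pos hx₀0
    simpa [f] using this
  refine ⟨f x₀, hc, fun x => ?_⟩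
  rcases eq_or_ne x 0 with rfl | hx
  · simp [f]
  · have hxn : (0:ℝ) < ‖x‖ := norm_pos_iff.mpr hx
    set u : Fin p → ℝ := ‖x‖⁻¹ • x with hu
    have hun : ‖u‖ = 1 := by
      rw [hu, norm_smul, norm_inv, norm_norm, inv_mul_cancel₀ hxn.ne']
    have hfu : f x₀ ≤ f u := hmin (mem_sphere_zero_iff_norm.mpr hun)
    have hxu : x = ‖x‖ • u := by
      rw [hu, smul_smul, mul_inv_cancel₀ hxn.ne', one_smul]
    have hfx : f x = ‖x‖ ^ 2 * f u := by
      rw [hf]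
      simp only []
      conv_lhs => rw [hxu]
      rw [Matrix.mulVec_smul, smul_dotProduct, dotProduct_smul,
        smul_eq_mul, smul_eq_mul]
      ring
    calc f x₀ * ‖x‖ ^ 2 ≤ f u * ‖x‖ ^ 2 := by
          apply mul_le_mul_of_nonneg_right hfu (by positivity)
      _ = f x := by rw [hfx]; ring

lemma adjugate_block_zero {p L : ℕ} (I : Fin L → Finset (Fin p))
    (hpart : ∀ i : Fin p, ∃! l, i ∈ I l)
    {M : Matrix (Fin p) (Fin p) ℝ} (hdet : IsUnit M.det)
    (hsupp : ∀ a b : Fin p, ¬ (∃ l, a ∈ I l ∧ b ∈ I l) → M a b = 0)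
    {i j : Fin p} (hij : ¬ (∃ l, i ∈ I l ∧ j ∈ I l)) :
    M.adjugate i j = 0 := by
  obtain ⟨l₀, hil₀, hul₀⟩ := hpart i
  set d : Fin p → ℝ := fun m => if m ∈ I l₀ then 1 else 0 with hd
  set D : Matrix (Fin p) (Fin p) ℝ := Matrix.diagonal d with hD
  have hcomm : M * D = D * M := by
    ext a b
    rw [Matrix.mul_diagonal, Matrix.diagonal_mul]
    rcases eq_or_ne (d a) (d b) with h | h
    · rw [h]; ring
    · have hMab : M a b = 0 := by
        apply hsupp
        rintro ⟨l, hal, hbl⟩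
        apply h
        have key : ∀ c : Fin p, c ∈ I l → (c ∈ I l₀ ↔ l = l₀) := by
          intro c hcl
          constructor
          · intro hcl₀
            obtain ⟨l', -, hu⟩ := hpart c
            rw [hu l hcl, hu l₀ hcl₀]
          · rintro rfl; exact hcl
        simp only [hd]
        rw [if_congr (key a hal) rfl rfl, if_congr (key b hbl) rfl rfl]
      rw [hMab]; ring
  have hinvcomm : M⁻¹ * D = D * M⁻¹ := by
    calc M⁻¹ * D = M⁻¹ * D * (M * M⁻¹) := by rw [Matrix.mul_nonsing_inv M hdet, mul_one]
      _ = M⁻¹ * (D * M) * M⁻¹ := by rw [← mul_assoc, ← mul_assoc, mul_assoc M⁻¹ D M]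
      _ = M⁻¹ * (M * D) * M⁻¹ := by rw [hcomm]
      _ = D * M⁻¹ := by
          rw [← mul_assoc, Matrix.nonsing_inv_mul M hdet, one_mul]
  have hinv0 : M⁻¹ i j = 0 := by
    have h1 : (M⁻¹ * D) i j = M⁻¹ i j * d j := by rw [hD, Matrix.mul_diagonal]
    have h2 : (D * M⁻¹) i j = d i * M⁻¹ i j := by rw [hD, Matrix.diagonal_mul]
    have hdi : d i = 1 := by simp [hd, hil₀]
    have hdj : d j = 0 := by
      simp only [hd, ite_eq_right_iff]
      intro hjl₀; exact absurd ⟨l₀, hil₀, hjl₀⟩ hij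
    have := congrArg (fun N => N i j) hinvcomm
    simp only [h1, h2, hdi, hdj] at this
    simpa using this.symm
  have : M⁻¹ i j = (M.det)⁻¹ * M.adjugate i j := by
    rw [Matrix.inv_def, Matrix.smul_apply, Ring.inverse_eq_inv', smul_eq_mul]
  rw [this] at hinv0
  have hdet0 : (M.det)⁻¹ ≠ 0 := inv_ne_zero (IsUnit.ne_zero hdet)
  exact (mul_eq_zero.mp hinv0).resolve_left hdet0

lemma updateColumn_comm' {p : ℕ} (M : Matrix (Fin p) (Fin p) ℝ) {i j : Fin p} (hij : i ≠ j)
    (f g : Fin p → ℝ) :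
    (M.updateCol j f).updateCol i g = (M.updateCol i g).updateCol j f := by
  ext a b
  simp only [Matrix.updateCol_apply]
  by_cases hbi : b = i
  · subst hbi
    simp [hij]
  · by_cases hbj : b = j <;> simp [hbi, hbj] <;>
      exact fun h => absurd h.symm hij

lemma col_eq_single_smul {p : ℕ} (i : Fin p) (u : ℝ) :
    Pi.single i u = u • (Pi.single i 1 : Fin p → ℝ) := by
  funext r
  rcases eq_or_ne r i with rfl | hr
  · simp
  · simp [Pi.single_eq_of_ne hr]

lemma det_updateColumn_single {p : ℕ} (M : Matrix (Fin p) (Fin p) ℝ) (i j : Fin p) :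
    (M.updateCol j (Pi.single i 1)).det = M.adjugate j i := by
  have h1 : M.adjugate j i = (M.adjugate)ᵀ i j := rfl
  rw [h1, Matrix.adjugate_transpose, Matrix.adjugate_apply,
    Matrix.updateRow_transpose, Matrix.det_transpose]

lemma det_perturb {p : ℕ} (M : Matrix (Fin p) (Fin p) ℝ) {i j : Fin p} (hij : i ≠ j) (u : ℝ) :
    (M + (Matrix.single i j u + Matrix.single j i u)).det
      = M.det + u * M.adjugate j i + u * (M.adjugate i j
          + u * ((M.updateCol i (Pi.single j 1)).updateCol j (Pi.single i 1)).det) := by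
  have hform : M + (Matrix.single i j u + Matrix.single j i u)
      = (M.updateCol j ((fun r => M r j) + Pi.single i u)).updateCol i
          ((fun r => M r i) + Pi.single j u) := by
    ext a b
    simp only [Matrix.add_apply, Matrix.updateCol_apply, Pi.add_apply, Matrix.single,
      Matrix.of_apply]
    by_cases hbi : b = i <;> by_cases hbj : b = j <;>
      by_cases hai : a = i <;> by_cases haj : a = j <;>
      simp_all [Pi.single_apply] <;> simp_all [eq_comm]
  rw [hform]
  set A := M.updateCol j ((fun r => M r j) + Pi.single i u) with hA
  have hAi : (fun r => A r i) = fun r => M r i := by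
    funext r; rw [hA, Matrix.updateCol_ne hij]
  have hdetA : A.det = M.det + u * M.adjugate j i := by
    rw [hA, Matrix.det_updateCol_add]
    congr 1
    · rw [Matrix.updateCol_eq_self]
    · rw [col_eq_single_smul, Matrix.det_updateCol_smul, det_updateColumn_single]
  have step1 : (A.updateCol i ((fun r => M r i) + Pi.single j u)).det
      = A.det + u * (A.updateCol i (Pi.single j 1)).det := by
    rw [Matrix.det_updateCol_add]
    congr 1
    · rw [← hAi, Matrix.updateCol_eq_self]
    · rw [col_eq_single_smul, Matrix.det_updateCol_smul]
  have step2 : (A.updateCol i (Pi.single j 1)).det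
      = M.adjugate i j
        + u * ((M.updateCol i (Pi.single j 1)).updateCol j (Pi.single i 1)).det := by
    rw [hA, updateColumn_comm' _ hij]
    set B := M.updateCol i (Pi.single j 1) with hB
    have hBj : (fun r => B r j) = fun r => M r j := by
      funext r; rw [hB, Matrix.updateCol_ne hij.symm]
    rw [Matrix.det_updateCol_add]
    congr 1
    · rw [← hBj, Matrix.updateCol_eq_self, hB, det_updateColumn_single]
    · rw [col_eq_single_smul, Matrix.det_updateCol_smul]
  rw [step1, step2, hdetA]

lemma rcon_bddBelow (q : ℝ≥0∞) [Fact (1 ≤ q)] (K p : ℕ)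
    (X : Fin K → Matrix (Fin p) (Fin p) ℝ) :
    BddBelow { r : ℝ | ∃ V : Fin K → Matrix (Fin p) (Fin p) ℝ,
      (∀ k, X k = V k + (V k)ᵀ) ∧
      r = ∑ j : Fin p, lqNorm q (fun ki : Fin K × Fin p => V ki.1 ki.2 j) } := by
  refine ⟨0, ?_⟩
  rintro r ⟨V, -, rfl⟩
  exact Finset.sum_nonneg fun j _ => lqNorm_nonneg' q _

lemma rcon_set_nonempty (q : ℝ≥0∞) (K p : ℕ)
    (X : Fin K → Matrix (Fin p) (Fin p) ℝ) (hX : ∀ k, (X k)ᵀ = X k) :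
    Set.Nonempty { r : ℝ | ∃ V : Fin K → Matrix (Fin p) (Fin p) ℝ,
      (∀ k, X k = V k + (V k)ᵀ) ∧
      r = ∑ j : Fin p, lqNorm q (fun ki : Fin K × Fin p => V ki.1 ki.2 j) } := by
  refine ⟨_, ⟨fun k => (1/2 : ℝ) • X k, fun k => ?_, rfl⟩⟩
  rw [Matrix.transpose_smul, hX k, ← add_smul]
  norm_num

lemma rcon_update_le (q : ℝ≥0∞) [Fact (1 ≤ q)] {K p : ℕ}
    (A : Fin K → Matrix (Fin p) (Fin p) ℝ) (hA : ∀ k, (A k)ᵀ = A k)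
    (k : Fin K) (i j : Fin p) (u : ℝ) :
    rcon q K p (Function.update A k (A k + (Matrix.single i j u + Matrix.single j i u)))
      ≤ rcon q K p A + |u| := by
  set Anew := Function.update A k (A k + (Matrix.single i j u + Matrix.single j i u))
    with hAnew
  have hle : ∀ r ∈ { r : ℝ | ∃ V : Fin K → Matrix (Fin p) (Fin p) ℝ,
      (∀ k', A k' = V k' + (V k')ᵀ) ∧
      r = ∑ j' : Fin p, lqNorm q (fun ki : Fin K × Fin p => V ki.1 ki.2 j') },
      rcon q K p Anew ≤ r + |u| := by
    rintro r ⟨V, hV, rfl⟩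
    set W := Function.update V k (V k + Matrix.single i j u) with hW
    have hdec : ∀ k', Anew k' = W k' + (W k')ᵀ := by
      intro k'
      rcases eq_or_ne k' k with rfl | hk
      · rw [hAnew, hW]
        simp only [Function.update_self]
        rw [Matrix.transpose_add, std_transpose, hV k']
        abel
      · rw [hAnew, hW]
        rw [Function.update_of_ne hk, Function.update_of_ne hk]
        exact hV k'
    have hmem : (∑ j' : Fin p, lqNorm q (fun ki : Fin K × Fin p => W ki.1 ki.2 j'))
        ∈ { r : ℝ | ∃ V : Fin K → Matrix (Fin p) (Fin p) ℝ,
          (∀ k', Anew k' = V k' + (V k')ᵀ) ∧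
          r = ∑ j' : Fin p, lqNorm q (fun ki : Fin K × Fin p => V ki.1 ki.2 j') } :=
      ⟨W, hdec, rfl⟩
    have h1 : rcon q K p Anew
        ≤ ∑ j' : Fin p, lqNorm q (fun ki : Fin K × Fin p => W ki.1 ki.2 j') :=
      csInf_le (rcon_bddBelow q K p Anew) hmem
    refine h1.trans ?_
    have hcol : ∀ j' : Fin p, lqNorm q (fun ki : Fin K × Fin p => W ki.1 ki.2 j')
        ≤ lqNorm q (fun ki : Fin K × Fin p => V ki.1 ki.2 j')
          + (if j' = j then |u| else 0) := by
      intro j'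
      rcases eq_or_ne j' j with rfl | hj
      · have hfun : (fun ki : Fin K × Fin p => W ki.1 ki.2 j')
            = (fun ki : Fin K × Fin p => V ki.1 ki.2 j') + Pi.single (k, i) u := by
          funext ki
          rcases eq_or_ne ki.1 k with hk | hk
          · rw [hW]
            simp only [Pi.add_apply, hk, Function.update_self, Matrix.add_apply]
            congr 1
            rw [Pi.single_apply]
            by_cases h2 : ki.2 = i
            · rw [if_pos (by rw [Prod.ext_iff]; exact ⟨hk, h2⟩), h2,
                Matrix.single_apply_same]
            · rw [if_neg (fun h => h2 (by rw [h])),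
                Matrix.single_apply_of_ne _ _ _ _ _ (fun h => h2 h.1.symm)]
          · rw [hW]
            simp only [Pi.add_apply, Function.update_of_ne hk]
            rw [Pi.single_apply, if_neg (fun h => hk (by rw [h]))]
            ring
        rw [hfun, if_pos rfl]
        refine (lqNorm_add_le q _ _).trans ?_
        rw [lqNorm_single]
      · have hfun : (fun ki : Fin K × Fin p => W ki.1 ki.2 j')
            = (fun ki : Fin K × Fin p => V ki.1 ki.2 j') := by
          funext ki
          rcases eq_or_ne ki.1 k with hk | hk
          · rw [hW]
            simp only [hk, Function.update_self, Matrix.add_apply]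
            rw [Matrix.single_apply_of_ne _ _ _ _ _ (fun h => hj h.2.symm)]
            ring
          · rw [hW, Function.update_of_ne hk]
        rw [hfun, if_neg hj, add_zero]
    refine (Finset.sum_le_sum fun j' _ => hcol j').trans ?_
    rw [Finset.sum_add_distrib, Finset.sum_ite_eq' Finset.univ j (fun _ => |u|)]
    simp
  have h2 : rcon q K p Anew - |u| ≤ rcon q K p A := by
    apply le_csInf (rcon_set_nonempty q K p A hA)
    intro r hr
    linarith [hle r hr]
  linarith

lemma sum_sum_ite {p : ℕ} (i j : Fin p) (v : ℝ) :
    ∑ a : Fin p, ∑ b : Fin p, (if i = a ∧ j = b then v else 0) = v := by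
  have h : ∀ a : Fin p, ∑ b : Fin p, (if i = a ∧ j = b then v else 0)
      = if a = i then v else 0 := by
    intro a
    rcases eq_or_ne a i with rfl | ha
    · rw [if_pos rfl]
      rw [Finset.sum_eq_single j]
      · rw [if_pos ⟨rfl, rfl⟩]
      · intro b _ hb; rw [if_neg (fun h => hb h.2.symm)]
      · simp
    · rw [if_neg ha]
      apply Finset.sum_eq_zero
      intro b _
      rw [if_neg (fun h => ha h.1.symm)]
  simp only [h]
  rw [Finset.sum_ite_eq' Finset.univ i (fun _ => v)]
  simp

set_option maxHeartbeats 1000000 in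
/-- Theorem 4, necessary conditions for CNJGL: if the symmetric
positive definite minimizers Θ̂¹,…,Θ̂ᴷ of the CNJGL objective are supported on
T = ∪_l I_l × I_l for a partition (I_l), then n_k|Sᵏ_{ij}| ≤ λ₁ + λ₂/2 for all
(i,j) ∈ T^c and all k. -/
theorem cnjgl_necessary (K p L : ℕ) (hK : 1 ≤ K) (q : ℝ≥0∞) (hq : 1 ≤ q)
    (n : Fin K → ℝ) (hn : ∀ k, 0 < n k)
    (lam₁ lam₂ : ℝ) (hlam₁ : 0 ≤ lam₁) (hlam₂ : 0 ≤ lam₂)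
    (S : Fin K → Matrix (Fin p) (Fin p) ℝ) (hS : ∀ k, (S k).IsSymm)
    (I : Fin L → Finset (Fin p)) (hpart : ∀ i : Fin p, ∃! l, i ∈ I l)
    (Θ : Fin K → Matrix (Fin p) (Fin p) ℝ) (hΘ : ∀ k, (Θ k).PosDef)
    (hmin : ∀ Ψ : Fin K → Matrix (Fin p) (Fin p) ℝ, (∀ k, (Ψ k).PosDef) →
      cnjglObj q n lam₁ lam₂ S Θ ≤ cnjglObj q n lam₁ lam₂ S Ψ)
    (hsupp : ∀ k, ∀ i j : Fin p, ¬ (∃ l, i ∈ I l ∧ j ∈ I l) → Θ k i j = 0) :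
    ∀ k, ∀ i j : Fin p, ¬ (∃ l, i ∈ I l ∧ j ∈ I l) →
      n k * |S k i j| ≤ lam₁ + lam₂ / 2 := by
  haveI : Fact (1 ≤ q) := ⟨hq⟩
  intro k i j hij
  have hji : ¬ (∃ l, j ∈ I l ∧ i ∈ I l) := fun ⟨l, h1, h2⟩ => hij ⟨l, h2, h1⟩
  have hine : i ≠ j := by
    intro h
    obtain ⟨l, hl, -⟩ := hpart i
    exact hij ⟨l, hl, h ▸ hl⟩
  -- symmetry of the Θ's over ℝ
  have hsymmΘ : ∀ k', (Θ k')ᵀ = Θ k' := by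
    intro k'
    ext a b
    have := congrArg (fun N : Matrix (Fin p) (Fin p) ℝ => N a b) (hΘ k').1
    simpa [Matrix.conjTranspose_apply, Matrix.transpose_apply] using this
  have hSsym : S k j i = S k i j := by
    have := congrArg (fun N : Matrix (Fin p) (Fin p) ℝ => N i j) (hS k)
    simpa [Matrix.transpose_apply] using this
  obtain ⟨c, hc, hcoer⟩ := posdef_coercive (hΘ k) i
  set dd := (Θ k).det with hdd_def
  have hdd : 0 < dd := (hΘ k).det_pos
  set c3 := (((Θ k).updateCol i (Pi.single j 1)).updateCol j (Pi.single i 1)).det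
    with hc3_def
  have hadj1 : (Θ k).adjugate i j = 0 :=
    adjugate_block_zero I hpart hdd.ne'.isUnit (hsupp k) hij
  have hadj2 : (Θ k).adjugate j i = 0 :=
    adjugate_block_zero I hpart hdd.ne'.isUnit (hsupp k) hji
  -- the key variational inequality
  have key : ∀ u : ℝ, |u| < c / 2 → |u ^ 2 * c3| ≤ dd / 2 →
      0 ≤ n k * (Real.log dd - Real.log (dd + u ^ 2 * c3))
        + n k * (2 * (u * S k i j)) + lam₁ * (2 * |u|) + lam₂ * |u| := by
    intro u hu hu2
    set E := Matrix.single i j u + Matrix.single j i u with hE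
    set M' := Θ k + E with hM'
    set Ψ := Function.update Θ k M' with hΨ
    have hdet' : M'.det = dd + u ^ 2 * c3 := by
      rw [hM', hE, det_perturb (Θ k) hine u, hadj1, hadj2, ← hc3_def, ← hdd_def]
      ring
    have hdetpos : 0 < M'.det := by
      rw [hdet']
      have := neg_abs_le (u ^ 2 * c3)
      linarith
    -- positive definiteness of the perturbation
    have hψpos : ∀ k', (Ψ k').PosDef := by
      intro k'
      rcases eq_or_ne k' k with rfl | hk
      · rw [hΨ, Function.update_self]
        refine Matrix.PosDef.of_dotProduct_mulVec_pos ?_ ?_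
        · show M'ᴴ = M'
          rw [hM', Matrix.conjTranspose_add, (hΘ k').1]
          congr 1
          ext a b
          simp only [Matrix.conjTranspose_apply, star_trivial, hE, Matrix.add_apply,
            Matrix.single, Matrix.of_apply]
          rw [add_comm]
          congr 1
          · exact if_congr and_comm rfl rfl
          · exact if_congr and_comm rfl rfl
        · intro x hx
          have hstar : star x = x := by funext a; simp
          rw [hstar]
          have hval : x ⬝ᵥ (M' *ᵥ x)
              = x ⬝ᵥ ((Θ k') *ᵥ x) + (u * (x i * x j) + u * (x j * x i)) := by
            rw [hM', hE, Matrix.add_mulVec, dotProduct_add, Matrix.add_mulVec,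
              dotProduct_add, dot_std, dot_std]
            try ring
          rw [hval]
          have hN : (0:ℝ) < ‖x‖ := norm_pos_iff.mpr hx
          have hxi : |x i| ≤ ‖x‖ := by
            have := norm_le_pi_norm x i
            simpa using this
          have hxj : |x j| ≤ ‖x‖ := by
            have := norm_le_pi_norm x j
            simpa using this
          have hQ := hcoer x
          have hprod : |x i| * |x j| ≤ ‖x‖ * ‖x‖ :=
            mul_le_mul hxi hxj (abs_nonneg _) (norm_nonneg x)
          have habs : |u * (x i * x j)| = |u| * (|x i| * |x j|) := by
            rw [abs_mul, abs_mul]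
          have h2 : -(|u| * (|x i| * |x j|)) ≤ u * (x i * x j) := by
            rw [← habs]; exact neg_abs_le _
          have hpow : ‖x‖ ^ 2 = ‖x‖ * ‖x‖ := sq ‖x‖
          have hmono : |u| * (|x i| * |x j|) ≤ |u| * (‖x‖ * ‖x‖) :=
            mul_le_mul_of_nonneg_left hprod (abs_nonneg u)
          have hposprod : 0 < (c - 2 * |u|) * (‖x‖ * ‖x‖) :=
            mul_pos (by linarith) (mul_pos hN hN)
          nlinarith [h2, hQ, hmono, hposprod]
      · rw [hΨ, Function.update_of_ne hk]
        exact hΘ k'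
    have hminΨ := hmin Ψ hψpos
    -- term 1 : log-det and trace
    have htrace : (S k * M').trace
        = (S k * Θ k).trace + u * S k i j + u * S k i j := by
      rw [hM', hE, mul_add, Matrix.trace_add, mul_add, Matrix.trace_add,
        trace_mul_std, trace_mul_std, hSsym]
      ring
    have hterm1 : (∑ k', n k' * (-Real.log ((Ψ k').det) + (S k' * Ψ k').trace))
        = (∑ k', n k' * (-Real.log ((Θ k').det) + (S k' * Θ k').trace))
          + (n k * (Real.log dd - Real.log (dd + u ^ 2 * c3))
            + n k * (2 * (u * S k i j))) := by
      have hfun1 : (fun k' => n k' * (-Real.log ((Ψ k').det) + (S k' * Ψ k').trace))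
          = Function.update (fun k' => n k' * (-Real.log ((Θ k').det)
              + (S k' * Θ k').trace)) k
            (n k * (-Real.log (M'.det) + (S k * M').trace)) := by
        funext k'
        rcases eq_or_ne k' k with rfl | hk
        · rw [hΨ, Function.update_self, Function.update_self]
        · rw [hΨ, Function.update_of_ne hk, Function.update_of_ne hk]
      rw [hfun1, sum_update_sub]
      rw [htrace, hdet', ← hdd_def]
      ring
    -- term 2 : absolute values
    have habs_inner : (∑ a : Fin p, ∑ b : Fin p, |M' a b|)
        = (∑ a : Fin p, ∑ b : Fin p, |Θ k a b|) + 2 * |u| := by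
      have hpoint : ∀ a b : Fin p, |M' a b| = |Θ k a b|
          + ((if i = a ∧ j = b then |u| else 0) + (if j = a ∧ i = b then |u| else 0)) := by
        intro a b
        rw [hM', hE]
        simp only [Matrix.add_apply, Matrix.single, Matrix.of_apply]
        by_cases h1 : i = a ∧ j = b
        · have h2 : ¬ (j = a ∧ i = b) := by
            rintro ⟨h3, h4⟩
            exact hine (h1.1.trans h3.symm)
          have hz : Θ k a b = 0 := by
            apply hsupp k a b
            rw [← h1.1, ← h1.2]
            exact hij
          rw [if_pos h1, if_neg h2, if_pos h1, if_neg h2, hz]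
          simp
        · by_cases h2 : j = a ∧ i = b
          · have hz : Θ k a b = 0 := by
              apply hsupp k a b
              rw [← h2.1, ← h2.2]
              exact hji
            rw [if_pos h2, if_neg h1, if_pos h2, if_neg h1, hz]
            simp
          · rw [if_neg h1, if_neg h2, if_neg h1, if_neg h2]
            simp
      calc (∑ a : Fin p, ∑ b : Fin p, |M' a b|)
          = ∑ a : Fin p, ∑ b : Fin p, (|Θ k a b|
            + ((if i = a ∧ j = b then |u| else 0) + (if j = a ∧ i = b then |u| else 0))) := by
            exact Finset.sum_congr rfl fun a _ => Finset.sum_congr rfl fun b _ => hpoint a b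
        _ = (∑ a : Fin p, ∑ b : Fin p, |Θ k a b|) + 2 * |u| := by
            simp only [Finset.sum_add_distrib]
            rw [sum_sum_ite i j (|u|), sum_sum_ite j i (|u|)]
            ring
    have hterm2 : (∑ k', ∑ a : Fin p, ∑ b : Fin p, |Ψ k' a b|)
        = (∑ k', ∑ a : Fin p, ∑ b : Fin p, |Θ k' a b|) + 2 * |u| := by
      have hfun2 : (fun k' => ∑ a : Fin p, ∑ b : Fin p, |Ψ k' a b|)
          = Function.update (fun k' => ∑ a : Fin p, ∑ b : Fin p, |Θ k' a b|) k
            (∑ a : Fin p, ∑ b : Fin p, |M' a b|) := by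
        funext k'
        rcases eq_or_ne k' k with rfl | hk
        · rw [hΨ, Function.update_self, Function.update_self]
        · rw [hΨ, Function.update_of_ne hk, Function.update_of_ne hk]
      rw [hfun2, sum_update_sub, habs_inner]
      ring
    -- term 3 : rcon
    have hterm3 : rcon q K p (fun k' => Ψ k' - Matrix.diagonal fun a => Ψ k' a a)
        ≤ rcon q K p (fun k' => Θ k' - Matrix.diagonal fun a => Θ k' a a) + |u| := by
      have hdiageq : (fun k' => Ψ k' - Matrix.diagonal fun a => Ψ k' a a)
          = Function.update (fun k' => Θ k' - Matrix.diagonal fun a => Θ k' a a) k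
            ((Θ k - Matrix.diagonal fun a => Θ k a a) + E) := by
        funext k'
        rcases eq_or_ne k' k with rfl | hk
        · rw [hΨ, Function.update_self, Function.update_self, hM']
          have hdiag : (fun a => (Θ k' + E) a a) = fun a => Θ k' a a := by
            funext a
            rw [Matrix.add_apply, hE, Matrix.add_apply,
              Matrix.single_apply_of_ne _ _ _ _ _
                (fun h => hine (h.1.trans h.2.symm)),
              Matrix.single_apply_of_ne _ _ _ _ _
                (fun h => hine (h.2.trans h.1.symm))]
            ring
          rw [hdiag]
          abel
        · rw [hΨ, Function.update_of_ne hk, Function.update_of_ne hk]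
      rw [hdiageq, hE]
      apply rcon_update_le
      intro k'
      rw [Matrix.transpose_sub, Matrix.diagonal_transpose, hsymmΘ k']
    -- assemble
    have hobj : cnjglObj q n lam₁ lam₂ S Ψ ≤ cnjglObj q n lam₁ lam₂ S Θ
        + (n k * (Real.log dd - Real.log (dd + u ^ 2 * c3))
          + n k * (2 * (u * S k i j)) + lam₁ * (2 * |u|) + lam₂ * |u|) := by
      unfold cnjglObj
      rw [hterm1, hterm2, mul_add lam₁]
      have h3 := mul_le_mul_of_nonneg_left hterm3 hlam₂
      rw [mul_add] at h3
      linarith [h3]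
    linarith [hminΨ, hobj]
  -- epsilon argument
  have heps : ∀ ε : ℝ, 0 < ε → n k * |S k i j| ≤ lam₁ + lam₂ / 2 + ε := by
    intro ε hε
    set t := min (c / 4) (min (dd / (2 * (|c3| + 1)))
      (min 1 (ε * dd / (n k * (|c3| + 1))))) with ht_def
    have hc3pos : (0:ℝ) < |c3| + 1 := by positivity
    have ht0 : 0 < t := by
      apply lt_min (by linarith)
      apply lt_min (div_pos hdd (by positivity))
      exact lt_min one_pos (div_pos (mul_pos hε hdd) (mul_pos (hn k) hc3pos))
    have ht1 : t ≤ c / 4 := min_le_left _ _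
    have ht2 : t ≤ dd / (2 * (|c3| + 1)) := le_trans (min_le_right _ _) (min_le_left _ _)
    have ht3 : t ≤ 1 := le_trans (min_le_right _ _) (le_trans (min_le_right _ _) (min_le_left _ _))
    have ht4 : t ≤ ε * dd / (n k * (|c3| + 1)) :=
      le_trans (min_le_right _ _) (le_trans (min_le_right _ _) (min_le_right _ _))
    set u : ℝ := if 0 ≤ S k i j then -t else t with hu_def
    have hu_abs : |u| = t := by
      rw [hu_def]
      split_ifs with h
      · rw [abs_neg, abs_of_pos ht0]
      · rw [abs_of_pos ht0]
    have huS : u * S k i j = -(t * |S k i j|) := by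
      rw [hu_def]
      split_ifs with h
      · rw [abs_of_nonneg h]; ring
      · rw [abs_of_neg (lt_of_not_ge h)]; ring
    have hu_sq : u ^ 2 = t ^ 2 := by
      rw [hu_def]; split_ifs <;> ring
    have hcon1 : |u| < c / 2 := by rw [hu_abs]; linarith
    have hcon2 : |u ^ 2 * c3| ≤ dd / 2 := by
      rw [abs_mul, hu_sq, abs_of_nonneg (sq_nonneg t)]
      have h1 : t ^ 2 ≤ t := by nlinarith
      have h2 : t * (2 * (|c3| + 1)) ≤ dd := by
        rw [le_div_iff₀ (by positivity)] at ht2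
        exact ht2
      nlinarith [abs_nonneg c3, ht0.le, h1]
    have hkey := key u hcon1 hcon2
    -- log bound
    set x := u ^ 2 * c3 with hx_def
    have hxabs : |x| = t ^ 2 * |c3| := by
      rw [hx_def, abs_mul, hu_sq, abs_of_nonneg (sq_nonneg t)]
    have hddx : 0 < dd + x := by
      have := neg_abs_le x
      linarith [hcon2]
    have hlog : Real.log dd - Real.log (dd + x) ≤ 2 * |x| / dd := by
      have h1 : Real.log dd - Real.log (dd + x) = Real.log (dd / (dd + x)) :=
        (Real.log_div hdd.ne' hddx.ne').symm
      have h2 : Real.log (dd / (dd + x)) ≤ dd / (dd + x) - 1 :=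
        Real.log_le_sub_one_of_pos (div_pos hdd hddx)
      have h3 : dd / (dd + x) - 1 = -x / (dd + x) := by
        field_simp
        ring
      have h4 : -x / (dd + x) ≤ 2 * |x| / dd := by
        rw [div_le_div_iff₀ hddx hdd]
        have h5 : -x ≤ |x| := neg_le_abs x
        have h6 : dd ≤ 2 * (dd + x) := by
          have := neg_abs_le x
          linarith [hcon2]
        nlinarith [abs_nonneg x, hdd]
      linarith
    -- combine
    have hmain : 2 * t * (n k * |S k i j|)
        ≤ n k * (2 * |x| / dd) + 2 * lam₁ * t + lam₂ * t := by
      have h7 := mul_le_mul_of_nonneg_left hlog (hn k).le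
      rw [hu_abs, huS] at hkey
      linarith [hkey, h7]
    have h8 : n k * (2 * |x| / dd) ≤ 2 * t * ε := by
      have h5 : t * (n k * (|c3| + 1)) ≤ ε * dd :=
        (le_div_iff₀ (mul_pos (hn k) hc3pos)).mp ht4
      rw [hxabs]
      have heq : n k * (2 * (t ^ 2 * |c3|) / dd) = (n k * (2 * (t ^ 2 * |c3|))) / dd := by
        ring
      rw [heq, div_le_iff₀ hdd]
      have h6 := mul_le_mul_of_nonneg_left h5 (by linarith : (0:ℝ) ≤ 2 * t)
      nlinarith [h6, ht0.le, (hn k).le, abs_nonneg c3, ht3]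
    have h9 : (n k * |S k i j|) * (2 * t) ≤ (lam₁ + lam₂ / 2 + ε) * (2 * t) := by
      nlinarith [hmain, h8]
    exact le_of_mul_le_mul_right h9 (by linarith)
  by_contra hcon
  push_neg at hcon
  have := heps ((n k * |S k i j| - (lam₁ + lam₂ / 2)) / 2) (by linarith)
  linarith
end
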